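/- Let (Ω,d) be a bounded minimally nice metric space whose metric completion Ω̄^d is compact, and suppose (Ω,d) is quasihyperbolically visible. Fix x₀ ∈ Ω and let γ_n : [0,∞) → (Ω,k_Ω) be quasihyperbolic geodesic rays with γ_n(0) = x₀ for all n. If (γ_n) converges uniformly on compact subsets of [0,∞) to a quasihyperbolic geodesic ray γ : [0,∞) → (Ω,k_Ω), then lim_{t→∞} γ(t) = lim_{n→∞} lim_{t→∞} γ_n(t), all limits taken in the metric d. -/

import Mathlib

open Set Filter Metric Topology UniformConvergence ENNReal

noncomputable section

variable {Ω : Type*} [MetricSpace Ω]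

/-- The metric boundary `∂_dΩ` of a metric space `Ω`: the complement of (the image of) `Ω`
in its metric completion `Ω̄^d`. -/
def metricBoundary (Ω : Type*) [MetricSpace Ω] : Set (UniformSpace.Completion Ω) :=
  (Set.range ((↑) : Ω → UniformSpace.Completion Ω))ᶜ

/-- `δ_Ω(z)`: the distance from `z ∈ Ω` to the metric boundary `∂_dΩ`. -/
def deltaOmega (z : Ω) : ℝ :=
  Metric.infDist ((z : UniformSpace.Completion Ω)) (metricBoundary Ω)

/-- A rectifiable curve in `Ω`, defined on `[a,b]`, joining `x` to `y`. -/
def IsCurveIn (γ : ℝ → Ω) (a b : ℝ) (x y : Ω) : Prop :=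
  a ≤ b ∧ ContinuousOn γ (Set.Icc a b) ∧ γ a = x ∧ γ b = y ∧
    eVariationOn γ (Set.Icc a b) ≠ ⊤

/-- The `d`-arclength function `t ↦ ℓ_d(γ|_{[a,t]})` of a curve `γ` on `[a,b]` (clamped). -/
def arcLengthFun (γ : ℝ → Ω) (a b : ℝ) : ℝ → ℝ :=
  fun t => (eVariationOn γ (Set.Icc a (max a (min t b)))).toReal

theorem arcLengthFun_monotone {γ : ℝ → Ω} {a b : ℝ} (hab : a ≤ b)
    (hrect : eVariationOn γ (Set.Icc a b) ≠ ⊤) : Monotone (arcLengthFun γ a b) := by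
  intro s t hst
  apply ENNReal.toReal_mono
  · exact ne_top_of_le_ne_top hrect
      (eVariationOn.mono γ (Set.Icc_subset_Icc_right (max_le hab (min_le_right _ _))))
  · exact eVariationOn.mono γ (Set.Icc_subset_Icc_right
      (max_le_max le_rfl (min_le_min hst le_rfl)))

/-- The quasihyperbolic length `ℓ_k(γ) = ∫_γ |dz| / δ_Ω(z)` of a rectifiable curve
`γ : [a,b] → Ω`: the Lebesgue–Stieltjes integral of `1/δ_Ω(γ(t))` with respect to the
arclength function of `γ`.  (Non-rectifiable "curves" get length `⊤`.) -/
def qhLength (γ : ℝ → Ω) (a b : ℝ) : ℝ≥0∞ :=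
  if h : a ≤ b ∧ eVariationOn γ (Set.Icc a b) ≠ ⊤ then
    ∫⁻ t in Set.Icc a b, ENNReal.ofReal (1 / deltaOmega (γ t))
      ∂(arcLengthFun_monotone h.1 h.2).stieltjesFunction.measure
  else ⊤

/-- The quasihyperbolic distance (as an extended real): the infimum of the quasihyperbolic
lengths of rectifiable curves in `Ω` joining `x` to `y`. -/
def qhEDist (x y : Ω) : ℝ≥0∞ :=
  ⨅ (γ : ℝ → Ω) (a : ℝ) (b : ℝ) (_ : IsCurveIn γ a b x y), qhLength γ a b

/-- The quasihyperbolic metric `k_Ω`. -/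
def qhDist (x y : Ω) : ℝ :=
  (qhEDist x y).toReal

/-- The inner (length) metric `λ_Ω` associated to `(Ω,d)`, as an extended real. -/
def innerEDist (x y : Ω) : ℝ≥0∞ :=
  ⨅ (γ : ℝ → Ω) (a : ℝ) (b : ℝ) (_ : IsCurveIn γ a b x y), eVariationOn γ (Set.Icc a b)

/-- `(Ω,d)` is minimally nice: rectifiably connected, locally compact, non-complete, and the
identity map from `(Ω,d)` to `(Ω,λ_Ω)` is continuous. -/
structure MinimallyNice (Ω : Type*) [MetricSpace Ω] : Prop where
  rectifiablyConnected : ∀ x y : Ω, ∃ (γ : ℝ → Ω) (a b : ℝ), IsCurveIn γ a b x y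
  locallyCompact : LocallyCompactSpace Ω
  nonComplete : ¬ CompleteSpace Ω
  idContinuous : ∀ x : Ω, Filter.Tendsto (fun y => innerEDist x y) (nhds x) (nhds 0)

/-- `γ` is a geodesic of the quasihyperbolic metric on the parameter set `s`
(parametrized by `k_Ω`-arclength). -/
def IsQHGeodesicOn (γ : ℝ → Ω) (s : Set ℝ) : Prop :=
  ∀ ⦃u⦄, u ∈ s → ∀ ⦃v⦄, v ∈ s → qhDist (γ u) (γ v) = |u - v|

/-- A quasihyperbolic geodesic segment from `x` to `y`. -/
def IsQHGeodesicSeg (γ : ℝ → Ω) (a b : ℝ) (x y : Ω) : Prop :=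
  a ≤ b ∧ γ a = x ∧ γ b = y ∧ IsQHGeodesicOn γ (Set.Icc a b)

/-- A quasihyperbolic geodesic ray `γ : [0,∞) → (Ω, k_Ω)`. -/
def IsQHGeodesicRay (γ : ℝ → Ω) : Prop :=
  IsQHGeodesicOn γ (Set.Ici 0)

/-- A quasihyperbolic geodesic line `γ : (-∞,∞) → (Ω, k_Ω)`. -/
def IsQHGeodesicLine (γ : ℝ → Ω) : Prop :=
  IsQHGeodesicOn γ Set.univ

/-- `(Ω,d)` is quasihyperbolically visible: for every pair of distinct points `p,q` of the
metric boundary there is a compact set `K ⊆ Ω` such that for all sequences `xₙ → p`, `yₙ → q`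
(in the metric `d`), every quasihyperbolic geodesic joining `xₙ` and `yₙ` meets `K`. -/
def QHVisible (Ω : Type*) [MetricSpace Ω] : Prop :=
  ∀ p q : UniformSpace.Completion Ω, p ∈ metricBoundary Ω → q ∈ metricBoundary Ω → p ≠ q →
    ∃ K : Set Ω, IsCompact K ∧
      ∀ x y : ℕ → Ω,
        Filter.Tendsto (fun n => ((x n : Ω) : UniformSpace.Completion Ω))
          Filter.atTop (nhds p) →
        Filter.Tendsto (fun n => ((y n : Ω) : UniformSpace.Completion Ω))
          Filter.atTop (nhds q) →
        ∀ (n : ℕ) (γ : ℝ → Ω) (a b : ℝ), IsQHGeodesicSeg γ a b (x n) (y n) →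
          ∃ t ∈ Set.Icc a b, γ t ∈ K

/-- `(Ω, k_Ω)` is Gromov hyperbolic: there is `δ ≥ 0` such that every quasihyperbolic
geodesic triangle is `δ`-thin. -/
def QHGromovHyperbolic (Ω : Type*) [MetricSpace Ω] : Prop :=
  ∃ δ : ℝ, 0 ≤ δ ∧
    ∀ (x y z : Ω) (γ₁ γ₂ γ₃ : ℝ → Ω) (a₁ b₁ a₂ b₂ a₃ b₃ : ℝ),
      IsQHGeodesicSeg γ₁ a₁ b₁ x y → IsQHGeodesicSeg γ₂ a₂ b₂ y z →
      IsQHGeodesicSeg γ₃ a₃ b₃ x z →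
      ∀ t ∈ Set.Icc a₁ b₁,
        ∃ u, (u ∈ Set.Icc a₂ b₂ ∧ qhDist (γ₁ t) (γ₂ u) ≤ δ) ∨
             (u ∈ Set.Icc a₃ b₃ ∧ qhDist (γ₁ t) (γ₃ u) ≤ δ)

/-- `(Ω,d)` is quasiconvex: some `A ≥ 1` so that every two points are joined by a curve of
`d`-length at most `A·d(x,y)`. -/
def QuasiconvexSpace (Ω : Type*) [MetricSpace Ω] : Prop :=
  ∃ A : ℝ, 1 ≤ A ∧ ∀ x y : Ω, ∃ (γ : ℝ → Ω) (a b : ℝ), IsCurveIn γ a b x y ∧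
    eVariationOn γ (Set.Icc a b) ≤ ENNReal.ofReal (A * dist x y)

/-- The Gehring–Hayman theorem holds in `(Ω,d)`: quasihyperbolic geodesics are essentially
the shortest curves, up to a multiplicative constant `C ≥ 1`. -/
def GehringHayman (Ω : Type*) [MetricSpace Ω] : Prop :=
  ∃ C : ℝ, 1 ≤ C ∧ ∀ x y : Ω, ∀ (γ : ℝ → Ω) (a b : ℝ), IsQHGeodesicSeg γ a b x y →
    ∀ (σ : ℝ → Ω) (a' b' : ℝ), IsCurveIn σ a' b' x y →
      eVariationOn γ (Set.Icc a b) ≤ ENNReal.ofReal C * eVariationOn σ (Set.Icc a' b')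
namespace QHAux

open UniformSpace (Completion)

variable {Ω : Type*} [MetricSpace Ω]

/-! ### Gluing continuous functions on adjacent intervals -/

theorem continuousOn_Icc_glue {X : Type*} [TopologicalSpace X] {f : ℝ → X} {a b c : ℝ}
    (hab : a ≤ b) (hbc : b ≤ c) (h1 : ContinuousOn f (Set.Icc a b))
    (h2 : ContinuousOn f (Set.Icc b c)) : ContinuousOn f (Set.Icc a c) := by
  rw [← Set.Icc_union_Icc_eq_Icc hab hbc]
  intro t ht
  have c1 : ContinuousWithinAt f (Set.Icc a b) t := by
    by_cases h : t ∈ Set.Icc a b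
    · exact h1 t h
    · exact continuousWithinAt_of_notMem_closure (by rwa [isClosed_Icc.closure_eq])
  have c2 : ContinuousWithinAt f (Set.Icc b c) t := by
    by_cases h : t ∈ Set.Icc b c
    · exact h2 t h
    · exact continuousWithinAt_of_notMem_closure (by rwa [isClosed_Icc.closure_eq])
  exact c1.union c2

/-! ### Reversal and concatenation of curves -/

theorem reverse_curve {σ : ℝ → Ω} {a b : ℝ} {x y : Ω} (hc : IsCurveIn σ a b x y) :
    ∃ τ : ℝ → Ω, IsCurveIn τ a b y x ∧
      eVariationOn τ (Set.Icc a b) = eVariationOn σ (Set.Icc a b) ∧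
      ∀ t ∈ Set.Icc a b, τ t ∈ σ '' Set.Icc a b := by
  obtain ⟨hab, hcont, hxa, hyb, hfin⟩ := hc
  refine ⟨fun t => σ (a + b - t), ⟨hab, ?_, ?_, ?_, ?_⟩, ?_, ?_⟩
  · exact hcont.comp ((continuous_const.sub continuous_id).continuousOn)
      (fun t ht => ⟨by cases ht; linarith, by cases ht; linarith⟩)
  · show σ (a + b - a) = y
    rw [show a + b - a = b by ring, hyb]
  · show σ (a + b - b) = x
    rw [show a + b - b = a by ring, hxa]
  · have : eVariationOn (fun t => σ (a + b - t)) (Set.Icc a b)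
        = eVariationOn σ (Set.Icc a b) := by
      have hanti : AntitoneOn (fun t : ℝ => a + b - t) (Set.Icc a b) :=
        fun u _ v _ huv => by simp only; linarith
      have hcomp := eVariationOn.comp_eq_of_antitoneOn σ (fun t : ℝ => a + b - t) hanti
      have himg : (fun t : ℝ => a + b - t) '' Set.Icc a b = Set.Icc a b := by
        rw [Set.image_const_sub_Icc]; congr 1 <;> ring
      rw [himg] at hcomp
      exact hcomp
    rw [this]; exact hfin
  · have hanti : AntitoneOn (fun t : ℝ => a + b - t) (Set.Icc a b) :=
      fun u _ v _ huv => by simp only; linarith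
    have hcomp := eVariationOn.comp_eq_of_antitoneOn σ (fun t : ℝ => a + b - t) hanti
    have himg : (fun t : ℝ => a + b - t) '' Set.Icc a b = Set.Icc a b := by
      rw [Set.image_const_sub_Icc]; congr 1 <;> ring
    rw [himg] at hcomp
    exact hcomp
  · intro t ht
    exact ⟨a + b - t, ⟨by cases ht; linarith, by cases ht; linarith⟩, rfl⟩

theorem concat_curve {σ₁ σ₂ : ℝ → Ω} {a₁ b₁ a₂ b₂ : ℝ} {x y z : Ω}
    (h1 : IsCurveIn σ₁ a₁ b₁ x y) (h2 : IsCurveIn σ₂ a₂ b₂ y z) :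
    ∃ (τ : ℝ → Ω) (A B : ℝ), IsCurveIn τ A B x z ∧
      eVariationOn τ (Set.Icc A B) ≤
        eVariationOn σ₁ (Set.Icc a₁ b₁) + eVariationOn σ₂ (Set.Icc a₂ b₂) ∧
      ∀ t ∈ Set.Icc A B, τ t ∈ σ₁ '' Set.Icc a₁ b₁ ∪ σ₂ '' Set.Icc a₂ b₂ := by
  obtain ⟨hab1, hcont1, hx1, hy1, hfin1⟩ := h1
  obtain ⟨hab2, hcont2, hy2, hz2, hfin2⟩ := h2
  set B : ℝ := b₁ + (b₂ - a₂) with hB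
  set τ : ℝ → Ω := fun t => if t ≤ b₁ then σ₁ t else σ₂ (t - b₁ + a₂) with hτ
  have hb₁B : b₁ ≤ B := by rw [hB]; linarith
  have E1 : Set.EqOn τ σ₁ (Set.Icc a₁ b₁) := fun t ht => if_pos ht.2
  have E2 : Set.EqOn τ (σ₂ ∘ fun t => t - b₁ + a₂) (Set.Icc b₁ B) := by
    rintro t ⟨ht1, _⟩
    by_cases h : t ≤ b₁
    · have hteq : t = b₁ := le_antisymm h ht1
      subst hteq
      simp only [hτ, if_pos le_rfl, Function.comp]
      rw [hy1, show t - t + a₂ = a₂ by ring, hy2]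
    · simp only [hτ, if_neg h, Function.comp]
  have hmaps : ∀ t ∈ Set.Icc b₁ B, t - b₁ + a₂ ∈ Set.Icc a₂ b₂ := by
    rintro t ⟨ht1, ht2⟩
    rw [hB] at ht2
    exact ⟨by linarith, by linarith⟩
  have hvar1 : eVariationOn τ (Set.Icc a₁ b₁) = eVariationOn σ₁ (Set.Icc a₁ b₁) :=
    eVariationOn.eq_of_eqOn E1
  have hvar2 : eVariationOn τ (Set.Icc b₁ B) = eVariationOn σ₂ (Set.Icc a₂ b₂) := by
    rw [eVariationOn.eq_of_eqOn E2]
    have hmono : MonotoneOn (fun t : ℝ => t - b₁ + a₂) (Set.Icc b₁ B) :=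
      fun u _ v _ huv => by simp only; linarith
    rw [eVariationOn.comp_eq_of_monotoneOn σ₂ _ hmono]
    congr 1
    have hfe : (fun t : ℝ => t - b₁ + a₂) = fun t : ℝ => t + (a₂ - b₁) := by
      funext t; ring
    rw [hfe, Set.image_add_const_Icc]
    have he1 : b₁ + (a₂ - b₁) = a₂ := by ring
    have he2 : B + (a₂ - b₁) = b₂ := by rw [hB]; ring
    rw [he1, he2]
  have hsplit : eVariationOn τ (Set.Icc a₁ b₁) + eVariationOn τ (Set.Icc b₁ B) =
      eVariationOn τ (Set.Icc a₁ B) := by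
    have h := eVariationOn.Icc_add_Icc τ (s := Set.univ) hab1 hb₁B (Set.mem_univ b₁)
    simpa using h
  have hvartot : eVariationOn τ (Set.Icc a₁ B) =
      eVariationOn σ₁ (Set.Icc a₁ b₁) + eVariationOn σ₂ (Set.Icc a₂ b₂) := by
    rw [← hsplit, hvar1, hvar2]
  refine ⟨τ, a₁, B, ⟨hab1.trans hb₁B, ?_, ?_, ?_, ?_⟩, le_of_eq hvartot, ?_⟩
  · refine continuousOn_Icc_glue hab1 hb₁B ?_ ?_
    · exact (hcont1.congr E1)
    · refine ContinuousOn.congr ?_ E2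
      exact hcont2.comp ((continuous_id.sub continuous_const).add continuous_const).continuousOn
        hmaps
  · rw [E1 ⟨le_rfl, hab1⟩, hx1]
  · rw [E2 ⟨hb₁B, le_rfl⟩]
    simp only [Function.comp]
    rw [show B - b₁ + a₂ = b₂ by rw [hB]; ring, hz2]
  · rw [hvartot]
    exact ENNReal.add_ne_top.2 ⟨hfin1, hfin2⟩
  · rintro t ⟨ht1, ht2⟩
    by_cases h : t ≤ b₁
    · left
      exact ⟨t, ⟨ht1, h⟩, (E1 ⟨ht1, h⟩).symm⟩
    · right
      refine ⟨t - b₁ + a₂, hmaps t ⟨le_of_lt (not_le.mp h), ht2⟩, ?_⟩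
      rw [hτ]; simp only [if_neg h]

end QHAux
namespace QHAux

open UniformSpace (Completion)

variable {Ω : Type*} [MetricSpace Ω]

/-! ### The boundary and the distance function `δ_Ω` -/

theorem exists_closedBall_subset_range (hloc : LocallyCompactSpace Ω) (z : Ω) :
    ∃ r > 0, Metric.closedBall ((z : Completion Ω)) r ⊆
      Set.range ((↑) : Ω → Completion Ω) := by
  haveI := hloc
  obtain ⟨K, hK, hKn⟩ := exists_compact_mem_nhds z
  obtain ⟨ε, hε, hball⟩ := Metric.mem_nhds_iff.1 hKn
  refine ⟨ε / 4, by positivity, fun w hw => ?_⟩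
  have hwcl : w ∈ closure (Set.range ((↑) : Ω → Completion Ω)) := by
    rw [(UniformSpace.Completion.denseRange_coe (α := Ω)).closure_range]
    trivial
  obtain ⟨u, hu, hulim⟩ := mem_closure_iff_seq_limit.1 hwcl
  choose ω hω using hu
  have hev : ∀ᶠ n in Filter.atTop, dist (u n) w < ε / 4 :=
    (Metric.tendsto_atTop.1 hulim (ε / 4) (by positivity)).imp (fun N hN =>
      fun n hn => hN n hn) |>.choose_spec |> fun _ => by
        obtain ⟨N, hN⟩ := Metric.tendsto_atTop.1 hulim (ε / 4) (by positivity)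
        exact Filter.eventually_atTop.2 ⟨N, hN⟩
  have hmem : ∀ᶠ n in Filter.atTop, u n ∈ ((↑) : Ω → Completion Ω) '' K := by
    filter_upwards [hev] with n hn
    have hdz : dist (u n) (z : Completion Ω) < ε := by
      have h1 := Metric.mem_closedBall.1 hw
      have h2 := dist_triangle (u n) w (z : Completion Ω)
      calc dist (u n) (z : Completion Ω) ≤ dist (u n) w + dist w (z : Completion Ω) := h2
        _ < ε / 4 + ε / 4 := by linarith [h1]
        _ < ε := by linarith
    rw [← hω n] at hdz ⊢
    rw [UniformSpace.Completion.dist_eq] at hdz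
    exact ⟨ω n, hball (Metric.mem_ball.2 hdz), rfl⟩
  have hcl : IsClosed (((↑) : Ω → Completion Ω) '' K) :=
    (hK.image (UniformSpace.Completion.continuous_coe Ω)).isClosed
  have : w ∈ ((↑) : Ω → Completion Ω) '' K := by
    rw [← hcl.closure_eq]
    exact mem_closure_of_tendsto hulim hmem
  exact Set.image_subset_range _ _ this

theorem range_coe_isOpen (hloc : LocallyCompactSpace Ω) :
    IsOpen (Set.range ((↑) : Ω → Completion Ω)) := by
  rw [Metric.isOpen_iff]
  rintro _ ⟨z, rfl⟩
  obtain ⟨r, hr, h⟩ := exists_closedBall_subset_range hloc z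
  exact ⟨r, hr, fun w hw => h (Metric.ball_subset_closedBall hw)⟩

theorem boundary_isClosed (hloc : LocallyCompactSpace Ω) :
    IsClosed (metricBoundary Ω) :=
  (range_coe_isOpen hloc).isClosed_compl

theorem boundary_nonempty (hnc : ¬CompleteSpace Ω) : (metricBoundary Ω).Nonempty := by
  rw [Set.nonempty_iff_ne_empty]
  intro h
  apply hnc
  rw [completeSpace_iff_isComplete_range (UniformSpace.Completion.isUniformInducing_coe Ω)]
  have hr : Set.range ((↑) : Ω → Completion Ω) = Set.univ := by
    have := congrArg (·ᶜ) h
    simpa [metricBoundary] using this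
  rw [hr]
  exact complete_univ

theorem delta_pos (hloc : LocallyCompactSpace Ω) (hnc : ¬CompleteSpace Ω) (z : Ω) :
    0 < deltaOmega z := by
  refine ((boundary_isClosed hloc).notMem_iff_infDist_pos (boundary_nonempty hnc)).1 ?_
  intro h
  exact h (Set.mem_range_self z)

theorem delta_continuous : Continuous (deltaOmega : Ω → ℝ) :=
  (Metric.continuous_infDist_pt _).comp (UniformSpace.Completion.continuous_coe Ω)

theorem delta_le_diam (hnc : ¬CompleteSpace Ω) (hcpt : CompactSpace (Completion Ω)) (z : Ω) :
    deltaOmega z ≤ Metric.diam (Set.univ : Set (Completion Ω)) := by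
  obtain ⟨b, hb⟩ := boundary_nonempty hnc
  exact (Metric.infDist_le_dist_of_mem hb).trans
    (Metric.dist_le_diam_of_mem isCompact_univ.isBounded trivial trivial)

theorem diam_pos (hloc : LocallyCompactSpace Ω) (hnc : ¬CompleteSpace Ω)
    (hcpt : CompactSpace (Completion Ω)) (z : Ω) :
    0 < Metric.diam (Set.univ : Set (Completion Ω)) :=
  lt_of_lt_of_le (delta_pos hloc hnc z) (delta_le_diam hnc hcpt z)

theorem delta_lower (z w : Ω) : deltaOmega z - dist w z ≤ deltaOmega w := by
  have h := Metric.infDist_le_infDist_add_dist (x := (z : Completion Ω))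
    (y := (w : Completion Ω)) (s := metricBoundary Ω)
  rw [UniformSpace.Completion.dist_eq] at h
  have hd : dist z w = dist w z := dist_comm z w
  simp only [deltaOmega]
  linarith

end QHAux
namespace QHAux

open UniformSpace (Completion)

variable {Ω : Type*} [MetricSpace Ω]

/-! ### The arclength measure of a curve -/

theorem arcLengthFun_of_le {γ : ℝ → Ω} {a b t : ℝ} (h : t ≤ a) : arcLengthFun γ a b t = 0 := by
  have hm : max a (min t b) = a := max_eq_left ((min_le_left t b).trans h)
  rw [arcLengthFun]
  simp only [hm, Set.Icc_self]
  rw [eVariationOn.subsingleton γ Set.subsingleton_singleton]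
  simp

theorem arcLengthFun_of_ge {γ : ℝ → Ω} {a b t : ℝ} (hab : a ≤ b) (h : b ≤ t) :
    arcLengthFun γ a b t = (eVariationOn γ (Set.Icc a b)).toReal := by
  have hm : max a (min t b) = b := by rw [min_eq_right h, max_eq_right hab]
  rw [arcLengthFun]
  simp only [hm]

theorem arc_measure_Icc {γ : ℝ → Ω} {a b : ℝ} (hab : a ≤ b)
    (h : eVariationOn γ (Set.Icc a b) ≠ ⊤) (hmono : Monotone (arcLengthFun γ a b)) :
    hmono.stieltjesFunction.measure (Set.Icc a b) = eVariationOn γ (Set.Icc a b) := by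
  rw [StieltjesFunction.measure_Icc]
  have hgb : hmono.stieltjesFunction b = (eVariationOn γ (Set.Icc a b)).toReal := by
    rw [Monotone.stieltjesFunction_eq]
    apply rightLim_eq_of_tendsto
    apply Filter.Tendsto.congr' _ tendsto_const_nhds
    filter_upwards [self_mem_nhdsWithin] with t ht
    exact (arcLengthFun_of_ge hab (le_of_lt ht)).symm
  have hga : Function.leftLim (⇑hmono.stieltjesFunction) a = 0 := by
    apply leftLim_eq_of_tendsto
    apply Filter.Tendsto.congr' _ tendsto_const_nhds
    filter_upwards [self_mem_nhdsWithin] with t ht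
    rw [Monotone.stieltjesFunction_eq]
    symm
    apply rightLim_eq_of_tendsto
    apply Filter.Tendsto.congr' _ tendsto_const_nhds
    filter_upwards [Ioo_mem_nhdsGT_of_mem ⟨le_rfl, ht⟩] with s hs
    exact (arcLengthFun_of_le (le_of_lt hs.2)).symm
  rw [hgb, hga, sub_zero, ENNReal.ofReal_toReal h]

/-! ### Bounds on the quasihyperbolic length -/

theorem qhLength_le_of_delta_ge {γ : ℝ → Ω} {a b : ℝ} {x y : Ω} {m : ℝ}
    (hc : IsCurveIn γ a b x y) (hm : 0 < m)
    (hδ : ∀ t ∈ Set.Icc a b, m ≤ deltaOmega (γ t)) :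
    qhLength γ a b ≤ ENNReal.ofReal (1 / m) * eVariationOn γ (Set.Icc a b) := by
  obtain ⟨hab, -, -, -, hfin⟩ := hc
  rw [qhLength, dif_pos (⟨hab, hfin⟩ : a ≤ b ∧ eVariationOn γ (Set.Icc a b) ≠ ⊤)]
  have hle : (∫⁻ t in Set.Icc a b, ENNReal.ofReal (1 / deltaOmega (γ t))
      ∂(arcLengthFun_monotone hab hfin).stieltjesFunction.measure) ≤
      ∫⁻ _ in Set.Icc a b, ENNReal.ofReal (1 / m)
      ∂(arcLengthFun_monotone hab hfin).stieltjesFunction.measure := by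
    apply MeasureTheory.lintegral_mono_ae
    rw [MeasureTheory.ae_restrict_iff' measurableSet_Icc]
    exact MeasureTheory.ae_of_all _ fun t ht =>
      ENNReal.ofReal_le_ofReal (one_div_le_one_div_of_le hm (hδ t ht))
  refine le_trans (le_of_eq ?_) (hle.trans ?_)
  · rfl
  rw [MeasureTheory.setLIntegral_const, arc_measure_Icc hab hfin]

theorem qhLength_ge_of_delta_le {γ : ℝ → Ω} {a b : ℝ} {x y : Ω} {D : ℝ}
    (hc : IsCurveIn γ a b x y) (hD : 0 < D)
    (hδpos : ∀ t ∈ Set.Icc a b, 0 < deltaOmega (γ t))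
    (hδD : ∀ t ∈ Set.Icc a b, deltaOmega (γ t) ≤ D) :
    ENNReal.ofReal (1 / D) * eVariationOn γ (Set.Icc a b) ≤ qhLength γ a b := by
  obtain ⟨hab, -, -, -, hfin⟩ := hc
  rw [qhLength, dif_pos (⟨hab, hfin⟩ : a ≤ b ∧ eVariationOn γ (Set.Icc a b) ≠ ⊤)]
  have hge : (∫⁻ _ in Set.Icc a b, ENNReal.ofReal (1 / D)
      ∂(arcLengthFun_monotone hab hfin).stieltjesFunction.measure) ≤
      ∫⁻ t in Set.Icc a b, ENNReal.ofReal (1 / deltaOmega (γ t))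
      ∂(arcLengthFun_monotone hab hfin).stieltjesFunction.measure := by
    apply MeasureTheory.lintegral_mono_ae
    rw [MeasureTheory.ae_restrict_iff' measurableSet_Icc]
    exact MeasureTheory.ae_of_all _ fun t ht =>
      ENNReal.ofReal_le_ofReal (one_div_le_one_div_of_le (hδpos t ht) (hδD t ht))
  refine le_trans (le_of_eq ?_) hge
  rw [MeasureTheory.setLIntegral_const, arc_measure_Icc hab hfin]

theorem qhEDist_le_qhLength {x y : Ω} {γ : ℝ → Ω} {a b : ℝ} (hc : IsCurveIn γ a b x y) :
    qhEDist x y ≤ qhLength γ a b :=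
  iInf_le_of_le γ (iInf_le_of_le a (iInf_le_of_le b (iInf_le _ hc)))

theorem le_qhEDist {x y : Ω} {c : ℝ≥0∞}
    (h : ∀ γ : ℝ → Ω, ∀ a b : ℝ, IsCurveIn γ a b x y → c ≤ qhLength γ a b) :
    c ≤ qhEDist x y :=
  le_iInf fun γ => le_iInf fun a => le_iInf fun b => le_iInf fun hc => h γ a b hc

theorem qhDist_le_of_qhEDist_le {x y : Ω} {B : ℝ} (hB : 0 ≤ B)
    (h : qhEDist x y ≤ ENNReal.ofReal B) : qhDist x y ≤ B := by
  have := ENNReal.toReal_mono ENNReal.ofReal_ne_top h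
  rwa [ENNReal.toReal_ofReal hB] at this

end QHAux
namespace QHAux

open UniformSpace (Completion)

variable {Ω : Type*} [MetricSpace Ω]

theorem delta_min_on_curve (hloc : LocallyCompactSpace Ω) (hnc : ¬CompleteSpace Ω)
    {γ : ℝ → Ω} {a b : ℝ} {x y : Ω} (hc : IsCurveIn γ a b x y) :
    ∃ m > 0, ∀ t ∈ Set.Icc a b, m ≤ deltaOmega (γ t) := by
  obtain ⟨hab, hcont, -, -, -⟩ := hc
  have himg : IsCompact (γ '' Set.Icc a b) := isCompact_Icc.image_of_continuousOn hcont
  have hne : (γ '' Set.Icc a b).Nonempty := ⟨γ a, ⟨a, ⟨le_rfl, hab⟩, rfl⟩⟩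
  obtain ⟨w, hwmem, hwmin⟩ := himg.exists_isMinOn hne delta_continuous.continuousOn
  refine ⟨deltaOmega w, delta_pos hloc hnc w, fun t ht => ?_⟩
  exact hwmin ⟨t, ht, rfl⟩

theorem qhEDist_ne_top (hnice : MinimallyNice Ω) (x y : Ω) : qhEDist x y ≠ ⊤ := by
  obtain ⟨γ, a, b, hc⟩ := hnice.rectifiablyConnected x y
  obtain ⟨m, hm, hδ⟩ := delta_min_on_curve hnice.locallyCompact hnice.nonComplete hc
  have h1 : qhEDist x y ≤ ENNReal.ofReal (1 / m) * eVariationOn γ (Set.Icc a b) :=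
    (qhEDist_le_qhLength hc).trans (qhLength_le_of_delta_ge hc hm hδ)
  exact ne_top_of_le_ne_top (ENNReal.mul_ne_top ENNReal.ofReal_ne_top hc.2.2.2.2) h1

theorem dist_le_diam_mul_qhDist (hnice : MinimallyNice Ω)
    (hcpt : CompactSpace (Completion Ω)) (x y : Ω) :
    dist x y ≤ Metric.diam (Set.univ : Set (Completion Ω)) * qhDist x y := by
  set D := Metric.diam (Set.univ : Set (Completion Ω)) with hD
  have hDpos : 0 < D := diam_pos hnice.locallyCompact hnice.nonComplete hcpt x
  have h1 : ENNReal.ofReal (1 / D) * edist x y ≤ qhEDist x y := by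
    apply le_qhEDist
    intro γ a b hc
    have hedist : edist x y ≤ eVariationOn γ (Set.Icc a b) := by
      have h := eVariationOn.edist_le γ (Set.left_mem_Icc.2 hc.1) (Set.right_mem_Icc.2 hc.1)
      rwa [hc.2.2.1, hc.2.2.2.1] at h
    refine le_trans (mul_le_mul_of_nonneg_left hedist zero_le) ?_
    exact qhLength_ge_of_delta_le hc hDpos
      (fun t _ => delta_pos hnice.locallyCompact hnice.nonComplete (γ t))
      (fun t _ => delta_le_diam hnice.nonComplete hcpt (γ t))
  have h2 := ENNReal.toReal_mono (qhEDist_ne_top hnice x y) h1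
  have h3 : (ENNReal.ofReal (1 / D) * edist x y).toReal = (1 / D) * dist x y := by
    rw [edist_dist, ← ENNReal.ofReal_mul (by positivity), ENNReal.toReal_ofReal
      (by positivity)]
  rw [h3] at h2
  have h4 : D * (1 / D) = 1 := mul_one_div_cancel hDpos.ne'
  show dist x y ≤ D * (qhEDist x y).toReal
  calc dist x y = D * (1 / D * dist x y) := by rw [← mul_assoc, h4, one_mul]
    _ ≤ D * (qhEDist x y).toReal := mul_le_mul_of_nonneg_left h2 hDpos.le

theorem exists_small_curve (hnice : MinimallyNice Ω) (z : Ω) {ρ : ℝ} (hρ : 0 < ρ) :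
    ∃ r > 0, ∀ w : Ω, dist w z < r →
      ∃ (σ : ℝ → Ω) (a b : ℝ), IsCurveIn σ a b z w ∧
        eVariationOn σ (Set.Icc a b) ≤ ENNReal.ofReal ρ ∧
        ∀ t ∈ Set.Icc a b, dist (σ t) z ≤ ρ := by
  have h := hnice.idContinuous z
  have hmem : (Set.Iio (ENNReal.ofReal ρ)) ∈ nhds (0 : ℝ≥0∞) :=
    isOpen_Iio.mem_nhds (ENNReal.ofReal_pos.2 hρ)
  have hpre := h hmem
  obtain ⟨r, hr, hsub⟩ := Metric.mem_nhds_iff.1 hpre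
  refine ⟨r, hr, fun w hw => ?_⟩
  have hlt : innerEDist z w < ENNReal.ofReal ρ := hsub (Metric.mem_ball.2 hw)
  rw [innerEDist] at hlt
  simp only [iInf_lt_iff] at hlt
  obtain ⟨σ, a, b, hc, hvar⟩ := hlt
  refine ⟨σ, a, b, hc, hvar.le, fun t ht => ?_⟩
  have h1 := eVariationOn.edist_le σ (Set.left_mem_Icc.2 hc.1) ht
  rw [hc.2.2.1] at h1
  have h2 : edist z (σ t) ≤ ENNReal.ofReal ρ := h1.trans hvar.le
  rw [edist_comm] at h2
  exact (edist_le_ofReal hρ.le).1 h2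

theorem exists_small_step (hnice : MinimallyNice Ω) (z : Ω) :
    ∃ r > 0, ∀ w w' : Ω, dist w z < r → dist w' z < r →
      qhEDist w w' ≤ ENNReal.ofReal (1 / 2) := by
  have hδ : 0 < deltaOmega z := delta_pos hnice.locallyCompact hnice.nonComplete z
  set ρ := deltaOmega z / 8 with hρdef
  have hρ : 0 < ρ := by rw [hρdef]; positivity
  obtain ⟨r, hr, hcur⟩ := exists_small_curve hnice z hρ
  refine ⟨r, hr, fun w w' hw hw' => ?_⟩
  obtain ⟨σ₁, a₁, b₁, hc1, hv1, hd1⟩ := hcur w hw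
  obtain ⟨σ₂, a₂, b₂, hc2, hv2, hd2⟩ := hcur w' hw'
  obtain ⟨σ₁', hc1', hv1', hmem1⟩ := reverse_curve hc1
  obtain ⟨τ, A, B, hcτ, hvτ, hmemτ⟩ := concat_curve hc1' hc2
  set m := 7 * deltaOmega z / 8 with hm
  have hmpos : 0 < m := by rw [hm]; positivity
  have hδτ : ∀ t ∈ Set.Icc A B, m ≤ deltaOmega (τ t) := by
    intro t ht
    rcases hmemτ t ht with h | h
    · obtain ⟨s, hs, heq⟩ := h
      obtain ⟨s', hs', heq'⟩ := hmem1 s hs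
      have hds := hd1 s' hs'
      have := delta_lower z (σ₁ s')
      rw [heq'] at this hds
      rw [← heq]
      rw [hm]; linarith
    · obtain ⟨s, hs, heq⟩ := h
      have hds := hd2 s hs
      have := delta_lower z (σ₂ s)
      rw [← heq]
      rw [hm]; linarith
  have hq : qhLength τ A B ≤ ENNReal.ofReal (1 / m) * (ENNReal.ofReal ρ + ENNReal.ofReal ρ) := by
    refine (qhLength_le_of_delta_ge hcτ hmpos hδτ).trans (mul_le_mul_of_nonneg_left ?_ zero_le)
    refine hvτ.trans (add_le_add ?_ hv2)
    rw [hv1']; exact hv1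
  have heq : ENNReal.ofReal (1 / m) * (ENNReal.ofReal ρ + ENNReal.ofReal ρ)
      = ENNReal.ofReal ((1 / m) * (ρ + ρ)) := by
    rw [← ENNReal.ofReal_add hρ.le hρ.le, ← ENNReal.ofReal_mul (by positivity)]
  have hval : (1 / m) * (ρ + ρ) ≤ 1 / 2 := by
    have hne : deltaOmega z ≠ 0 := hδ.ne'
    have hcalc : (1 / m) * (ρ + ρ) = 2 / 7 := by
      rw [hm, hρdef]; field_simp; ring
    rw [hcalc]; norm_num
  calc qhEDist w w' ≤ qhLength τ A B := qhEDist_le_qhLength hcτ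
    _ ≤ ENNReal.ofReal (1 / m) * (ENNReal.ofReal ρ + ENNReal.ofReal ρ) := hq
    _ = ENNReal.ofReal ((1 / m) * (ρ + ρ)) := heq
    _ ≤ ENNReal.ofReal (1 / 2) := ENNReal.ofReal_le_ofReal hval

end QHAux
namespace QHAux

open UniformSpace (Completion)

variable {Ω : Type*} [MetricSpace Ω]

theorem exists_ball_bound (hnice : MinimallyNice Ω) (x₀' z : Ω) :
    ∃ r > 0, ∃ B : ℝ, 0 ≤ B ∧ ∀ w : Ω, dist w z < r →
      qhEDist x₀' w ≤ ENNReal.ofReal B := by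
  obtain ⟨σ₀, a₀, b₀, hc0⟩ := hnice.rectifiablyConnected x₀' z
  obtain ⟨m₀, hm₀, hδ0⟩ := delta_min_on_curve hnice.locallyCompact hnice.nonComplete hc0
  have hδz : 0 < deltaOmega z := delta_pos hnice.locallyCompact hnice.nonComplete z
  set ρ := deltaOmega z / 2 with hρdef
  have hρ : 0 < ρ := by rw [hρdef]; positivity
  obtain ⟨r, hr, hcur⟩ := exists_small_curve hnice z hρ
  set m := min m₀ ρ with hm
  have hmpos : 0 < m := lt_min hm₀ hρ
  set V₀ := (eVariationOn σ₀ (Set.Icc a₀ b₀)).toReal with hV₀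
  have hV₀0 : 0 ≤ V₀ := ENNReal.toReal_nonneg
  refine ⟨r, hr, (1 / m) * (V₀ + ρ), by positivity, fun w hw => ?_⟩
  obtain ⟨σ, a, b, hc, hv, hd⟩ := hcur w hw
  obtain ⟨τ, A, B', hcτ, hvτ, hmemτ⟩ := concat_curve hc0 hc
  have hδτ : ∀ t ∈ Set.Icc A B', m ≤ deltaOmega (τ t) := by
    intro t ht
    rcases hmemτ t ht with h | h
    · obtain ⟨s, hs, heq⟩ := h
      rw [← heq]
      exact le_trans (min_le_left _ _) (hδ0 s hs)
    · obtain ⟨s, hs, heq⟩ := h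
      have hds := hd s hs
      have hlow := delta_lower z (σ s)
      rw [← heq]
      have : ρ ≤ deltaOmega (σ s) := by rw [hρdef] at hds ⊢; linarith
      exact le_trans (min_le_right _ _) this
  have h1 : qhEDist x₀' w ≤ qhLength τ A B' := qhEDist_le_qhLength hcτ
  have h2 := qhLength_le_of_delta_ge hcτ hmpos hδτ
  have h3 : eVariationOn τ (Set.Icc A B') ≤ ENNReal.ofReal (V₀ + ρ) := by
    refine hvτ.trans ?_
    rw [ENNReal.ofReal_add hV₀0 hρ.le, hV₀, ENNReal.ofReal_toReal hc0.2.2.2.2]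
    exact add_le_add le_rfl hv
  refine h1.trans (h2.trans ?_)
  refine le_trans (mul_le_mul_of_nonneg_left h3 zero_le) ?_
  rw [← ENNReal.ofReal_mul (by positivity)]

theorem exists_compact_bound (hnice : MinimallyNice Ω) {K : Set Ω} (hK : IsCompact K)
    (x₀' : Ω) :
    ∃ B : ℝ, 0 ≤ B ∧ ∀ w ∈ K, qhEDist x₀' w ≤ ENNReal.ofReal B := by
  choose r hr B hB hbound using fun z : Ω => exists_ball_bound hnice x₀' z
  obtain ⟨t, hts, hcov⟩ := hK.elim_nhds_subcover (fun z => Metric.ball z (r z))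
    (fun z _ => Metric.ball_mem_nhds z (hr z))
  refine ⟨∑ z ∈ t, B z, Finset.sum_nonneg fun z _ => hB z, fun w hw => ?_⟩
  obtain ⟨z, hzt, hzball⟩ := Set.mem_iUnion₂.1 (hcov hw)
  exact (hbound z w (Metric.mem_ball.1 hzball)).trans
    (ENNReal.ofReal_le_ofReal (Finset.single_le_sum (fun i _ => hB i) hzt))

/-! ### Geodesic rays -/

theorem ray_dist {γ : ℝ → Ω} (hγ : IsQHGeodesicRay γ) {u : ℝ} (hu : 0 ≤ u) :
    qhDist (γ 0) (γ u) = u := by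
  have h := hγ (Set.mem_Ici.2 le_rfl) (hu : u ∈ Set.Ici 0)
  rw [h, zero_sub, abs_neg, abs_of_nonneg hu]

theorem cluster_mem_boundary (hnice : MinimallyNice Ω) {γ : ℝ → Ω}
    (hγ : IsQHGeodesicRay γ) {p : Completion Ω}
    (hp : ∀ ε > 0, ∀ T : ℝ, ∃ t, T ≤ t ∧ 0 ≤ t ∧ dist ((γ t : Ω) : Completion Ω) p < ε) :
    p ∈ metricBoundary Ω := by
  by_contra hmem
  have hrange : p ∈ Set.range ((↑) : Ω → Completion Ω) := by
    by_contra h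
    exact hmem h
  obtain ⟨z, rfl⟩ := hrange
  obtain ⟨r, hr, hstep⟩ := exists_small_step hnice z
  obtain ⟨t, -, ht0, htd⟩ := hp r hr 0
  obtain ⟨t', ht'1, ht'0, htd'⟩ := hp r hr (t + 1)
  rw [UniformSpace.Completion.dist_eq] at htd htd'
  have hq := hstep (γ t) (γ t') htd htd'
  have hgeo : qhDist (γ t) (γ t') = |t - t'| := hγ (ht0 : t ∈ Set.Ici 0) (ht'0 : t' ∈ Set.Ici 0)
  have hle : qhDist (γ t) (γ t') ≤ 1 / 2 := qhDist_le_of_qhEDist_le (by norm_num) hq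
  rw [hgeo, abs_sub_comm, abs_of_nonneg (by linarith)] at hle
  linarith

theorem cluster_eq (hnice : MinimallyNice Ω) (hcpt : CompactSpace (Completion Ω))
    (hvis : QHVisible Ω) {γ : ℝ → Ω} (hγ : IsQHGeodesicRay γ) {p q : Completion Ω}
    (hp : ∀ ε > 0, ∀ T : ℝ, ∃ t, T ≤ t ∧ 0 ≤ t ∧ dist ((γ t : Ω) : Completion Ω) p < ε)
    (hq : ∀ ε > 0, ∀ T : ℝ, ∃ t, T ≤ t ∧ 0 ≤ t ∧ dist ((γ t : Ω) : Completion Ω) q < ε) :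
    p = q := by
  by_contra hne
  have hpb := cluster_mem_boundary hnice hγ hp
  have hqb := cluster_mem_boundary hnice hγ hq
  obtain ⟨K, hKcpt, hKprop⟩ := hvis p q hpb hqb hne
  obtain ⟨B, hB, hbound⟩ := exists_compact_bound hnice hKcpt (γ 0)
  have hs : ∀ n : ℕ, ∃ s, (n : ℝ) ≤ s ∧ 0 ≤ s ∧
      dist ((γ s : Ω) : Completion Ω) p < 1 / ((n : ℝ) + 1) :=
    fun n => hp (1 / ((n : ℝ) + 1)) (by positivity) n
  choose s hs1 hs0 hs2 using hs
  have ht : ∀ n : ℕ, ∃ t, s n ≤ t ∧ 0 ≤ t ∧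
      dist ((γ t : Ω) : Completion Ω) q < 1 / ((n : ℝ) + 1) :=
    fun n => hq (1 / ((n : ℝ) + 1)) (by positivity) (s n)
  choose t ht1 ht0 ht2 using ht
  have hx : Filter.Tendsto (fun n => ((γ (s n) : Ω) : Completion Ω)) Filter.atTop (nhds p) := by
    rw [tendsto_iff_dist_tendsto_zero]
    exact squeeze_zero (fun n => dist_nonneg) (fun n => (hs2 n).le)
      tendsto_one_div_add_atTop_nhds_zero_nat
  have hy : Filter.Tendsto (fun n => ((γ (t n) : Ω) : Completion Ω)) Filter.atTop (nhds q) := by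
    rw [tendsto_iff_dist_tendsto_zero]
    exact squeeze_zero (fun n => dist_nonneg) (fun n => (ht2 n).le)
      tendsto_one_div_add_atTop_nhds_zero_nat
  obtain ⟨n, hn⟩ := exists_nat_gt B
  have hseg : IsQHGeodesicSeg γ (s n) (t n) (γ (s n)) (γ (t n)) :=
    ⟨ht1 n, rfl, rfl, fun u hu v hv =>
      hγ (le_trans (hs0 n) hu.1 : u ∈ Set.Ici 0) (le_trans (hs0 n) hv.1 : v ∈ Set.Ici 0)⟩
  obtain ⟨u, hu, huK⟩ := hKprop (fun k => γ (s k)) (fun k => γ (t k)) hx hy n γ (s n) (t n) hseg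
  have hu0 : 0 ≤ u := le_trans (hs0 n) hu.1
  have hqd : qhDist (γ 0) (γ u) = u := ray_dist hγ hu0
  have hle : qhDist (γ 0) (γ u) ≤ B := qhDist_le_of_qhEDist_le hB (hbound _ huK)
  have : (n : ℝ) ≤ u := le_trans (hs1 n) hu.1
  linarith

theorem geodesic_ray_lands (hnice : MinimallyNice Ω) (hcpt : CompactSpace (Completion Ω))
    (hvis : QHVisible Ω) {γ : ℝ → Ω} (hγ : IsQHGeodesicRay γ) :
    ∃ p, p ∈ metricBoundary Ω ∧
      Filter.Tendsto (fun t : ℝ => ((γ t : Ω) : Completion Ω)) Filter.atTop (nhds p) := by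
  obtain ⟨p, φ, hφ, hφconv⟩ := CompactSpace.tendsto_subseq
    (fun n : ℕ => ((γ n : Ω) : Completion Ω))
  have hpc : ∀ ε > 0, ∀ T : ℝ, ∃ t, T ≤ t ∧ 0 ≤ t ∧
      dist ((γ t : Ω) : Completion Ω) p < ε := by
    intro ε hε T
    obtain ⟨N, hN⟩ := Metric.tendsto_atTop.1 hφconv ε hε
    obtain ⟨M, hM⟩ := exists_nat_ge T
    refine ⟨((φ (max N M) : ℕ) : ℝ), ?_, by positivity, ?_⟩
    · have h1 : (M : ℝ) ≤ (φ (max N M) : ℝ) := by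
        exact_mod_cast le_trans (le_max_right N M) hφ.le_apply
      linarith
    · exact hN (max N M) (le_max_left N M)
  refine ⟨p, cluster_mem_boundary hnice hγ hpc, ?_⟩
  rw [Metric.tendsto_atTop]
  by_contra hno
  push_neg at hno
  obtain ⟨ε, hε, hfar⟩ := hno
  have hfar' : ∀ n : ℕ, ∃ t, (n : ℝ) ≤ t ∧ ε ≤ dist ((γ t : Ω) : Completion Ω) p := by
    intro n
    obtain ⟨t, ht1, ht2⟩ := hfar (max (n : ℝ) 0)
    exact ⟨t, le_trans (le_max_left _ _) ht1, ht2⟩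
  choose tt htt1 htt2 using hfar'
  have htt0 : ∀ n, (0 : ℝ) ≤ tt n := fun n => le_trans (Nat.cast_nonneg n) (htt1 n)
  obtain ⟨q, ψ, hψ, hψconv⟩ := CompactSpace.tendsto_subseq
    (fun n : ℕ => ((γ (tt n) : Ω) : Completion Ω))
  have hqc : ∀ ε' > 0, ∀ T : ℝ, ∃ t, T ≤ t ∧ 0 ≤ t ∧
      dist ((γ t : Ω) : Completion Ω) q < ε' := by
    intro ε' hε' T
    obtain ⟨N, hN⟩ := Metric.tendsto_atTop.1 hψconv ε' hε'
    obtain ⟨M, hM⟩ := exists_nat_ge T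
    refine ⟨tt (ψ (max N M)), ?_, htt0 _, ?_⟩
    · have h1 : (M : ℝ) ≤ ((ψ (max N M) : ℕ) : ℝ) := by
        exact_mod_cast le_trans (le_max_right N M) hψ.le_apply
      linarith [htt1 (ψ (max N M))]
    · exact hN (max N M) (le_max_left N M)
  have hpq := cluster_eq hnice hcpt hvis hγ hpc hqc
  have hdq : ε ≤ dist q p :=
    ge_of_tendsto (hψconv.dist tendsto_const_nhds)
      (Filter.Eventually.of_forall fun k => htt2 (ψ k))
  rw [← hpq] at hdq
  rw [dist_self] at hdq
  linarith

end QHAux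
open QHAux

/-- **Lemma 4.5 (i).**  Let `(Ω,d)` be a bounded minimally nice, quasihyperbolically visible
space with compact metric completion, `x₀ ∈ Ω`, and let `γₙ` be quasihyperbolic geodesic rays
with `γₙ(0) = x₀` converging, uniformly (w.r.t. `k_Ω`) on compact subsets of `[0,∞)`, to a
quasihyperbolic geodesic ray `γ`.  Then `lim_{t→∞} γ(t) = lim_{n→∞} lim_{t→∞} γₙ(t)` in the
metric `d`. -/
theorem landing_point_continuous_rays
    {Ω : Type*} [MetricSpace Ω]
    (hnice : MinimallyNice Ω)
    (hbdd : Bornology.IsBounded (Set.univ : Set Ω))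
    (hcpt : CompactSpace (UniformSpace.Completion Ω))
    (hvis : QHVisible Ω)
    (x₀ : Ω) (γseq : ℕ → ℝ → Ω) (γ : ℝ → Ω)
    (hn : ∀ n, IsQHGeodesicRay (γseq n) ∧ γseq n 0 = x₀)
    (hγ : IsQHGeodesicRay γ)
    (hconv : ∀ C > (0:ℝ), ∀ ε > (0:ℝ), ∀ᶠ n in Filter.atTop,
      ∀ t ∈ Set.Icc 0 C, qhDist (γseq n t) (γ t) < ε) :
    ∃ (p : UniformSpace.Completion Ω) (q : ℕ → UniformSpace.Completion Ω),
      (∀ n, Filter.Tendsto (fun t : ℝ => ((γseq n t : Ω) : UniformSpace.Completion Ω))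
        Filter.atTop (nhds (q n))) ∧
      Filter.Tendsto (fun t : ℝ => ((γ t : Ω) : UniformSpace.Completion Ω))
        Filter.atTop (nhds p) ∧
      Filter.Tendsto q Filter.atTop (nhds p) := by
  classical
  have hloc := hnice.locallyCompact
  obtain ⟨p, hpb, hpt⟩ := geodesic_ray_lands hnice hcpt hvis hγ
  have hland : ∀ n, ∃ qn, qn ∈ metricBoundary Ω ∧
      Filter.Tendsto (fun t : ℝ => ((γseq n t : Ω) : UniformSpace.Completion Ω))
        Filter.atTop (nhds qn) :=
    fun n => geodesic_ray_lands hnice hcpt hvis (hn n).1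
  choose q hqb hqt using hland
  refine ⟨p, q, hqt, hpt, ?_⟩
  by_contra hno
  rw [Metric.tendsto_atTop] at hno
  push_neg at hno
  obtain ⟨ε, hε, hfar⟩ := hno
  choose f hf1 hf2 using hfar
  obtain ⟨q', ψ, hψ, hq'conv⟩ := CompactSpace.tendsto_subseq (fun N => q (f N))
  set g : ℕ → ℕ := fun k => f (ψ k) with hg
  have hgk : ∀ k, k ≤ g k := fun k => le_trans hψ.le_apply (hf1 (ψ k))
  have hq'c : Filter.Tendsto (fun k => q (g k)) Filter.atTop (nhds q') := hq'conv
  have hq'b : q' ∈ metricBoundary Ω :=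
    (boundary_isClosed hloc).mem_of_tendsto hq'c
      (Filter.Eventually.of_forall fun k => hqb _)
  have hne : p ≠ q' := by
    intro he
    have hd : ε ≤ dist q' p :=
      ge_of_tendsto (hq'c.dist tendsto_const_nhds)
        (Filter.Eventually.of_forall fun k => hf2 (ψ k))
    rw [← he, dist_self] at hd
    linarith
  obtain ⟨K, hKcpt, hKprop⟩ := hvis p q' hpb hq'b hne
  obtain ⟨B, hB0, hbound⟩ := exists_compact_bound hnice hKcpt x₀
  set D := Metric.diam (Set.univ : Set (UniformSpace.Completion Ω)) with hD
  have hDpos : 0 < D := diam_pos hloc hnice.nonComplete hcpt x₀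
  -- construct, for each j, an index and two times
  have hstep : ∀ j : ℕ, ∃ (n : ℕ) (aj tj : ℝ),
      (j : ℝ) ≤ aj ∧ aj ≤ tj ∧ 0 ≤ aj ∧
      dist ((γseq n aj : Ω) : UniformSpace.Completion Ω) p < 3 / ((j : ℝ) + 1) ∧
      dist ((γseq n tj : Ω) : UniformSpace.Completion Ω) q' < 3 / ((j : ℝ) + 1) := by
    intro j
    obtain ⟨T, hT⟩ := Metric.tendsto_atTop.1 hpt (1 / ((j : ℝ) + 1)) (by positivity)
    set aj := max T (j : ℝ) with haj
    have hpa : dist ((γ aj : Ω) : UniformSpace.Completion Ω) p < 1 / ((j : ℝ) + 1) :=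
      hT aj (le_max_left _ _)
    have hja : (j : ℝ) ≤ aj := le_max_right _ _
    have ha0 : 0 ≤ aj := le_trans (Nat.cast_nonneg j) hja
    have hεj : (0 : ℝ) < 1 / (((j : ℝ) + 1) * (D + 1)) := by positivity
    obtain ⟨N, hN⟩ := Filter.eventually_atTop.1 (hconv (aj + 1) (by linarith) _ hεj)
    have hev1 : ∀ᶠ k in Filter.atTop, N ≤ g k :=
      Filter.eventually_atTop.2 ⟨N, fun k hk => le_trans hk (hgk k)⟩
    have hev2 : ∀ᶠ k in Filter.atTop,
        dist (q (g k)) q' < 1 / ((j : ℝ) + 1) := by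
      obtain ⟨M, hM⟩ := Metric.tendsto_atTop.1 hq'c (1 / ((j : ℝ) + 1)) (by positivity)
      exact Filter.eventually_atTop.2 ⟨M, hM⟩
    obtain ⟨k, hk1, hk2⟩ := (hev1.and hev2).exists
    refine ⟨g k, aj, ?_⟩
    have hq1 : qhDist (γseq (g k) aj) (γ aj) < 1 / (((j : ℝ) + 1) * (D + 1)) :=
      hN (g k) hk1 aj ⟨ha0, by linarith⟩
    have hd1 : dist (γseq (g k) aj) (γ aj) ≤ D * (1 / (((j : ℝ) + 1) * (D + 1))) :=
      le_trans (dist_le_diam_mul_qhDist hnice hcpt _ _)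
        (mul_le_mul_of_nonneg_left hq1.le hDpos.le)
    have hDe : D * (1 / (((j : ℝ) + 1) * (D + 1))) ≤ 1 / ((j : ℝ) + 1) := by
      have h1 : (0 : ℝ) < (j : ℝ) + 1 := by positivity
      have h2 : (0 : ℝ) < D + 1 := by linarith
      rw [show D * (1 / (((j : ℝ) + 1) * (D + 1))) = D / (((j : ℝ) + 1) * (D + 1)) by ring,
        div_le_div_iff₀ (by positivity) h1]
      nlinarith
    have hx : dist ((γseq (g k) aj : Ω) : UniformSpace.Completion Ω) p < 3 / ((j : ℝ) + 1) := by
      have htr := dist_triangle ((γseq (g k) aj : Ω) : UniformSpace.Completion Ω)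
        ((γ aj : Ω) : UniformSpace.Completion Ω) p
      rw [UniformSpace.Completion.dist_eq] at htr
      have h3 : (0 : ℝ) < (j : ℝ) + 1 := by positivity
      have : 1 / ((j : ℝ) + 1) + 1 / ((j : ℝ) + 1) ≤ 3 / ((j : ℝ) + 1) := by
        rw [← add_div, div_le_div_iff₀ h3 h3]; nlinarith
      linarith
    obtain ⟨T', hT'⟩ := Metric.tendsto_atTop.1 (hqt (g k)) (1 / ((j : ℝ) + 1)) (by positivity)
    refine ⟨max T' aj, hja, le_max_right _ _, ha0, hx, ?_⟩
    have hy1 : dist ((γseq (g k) (max T' aj) : Ω) : UniformSpace.Completion Ω) (q (g k))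
        < 1 / ((j : ℝ) + 1) := hT' _ (le_max_left _ _)
    have htr := dist_triangle ((γseq (g k) (max T' aj) : Ω) : UniformSpace.Completion Ω)
      (q (g k)) q'
    have h3 : (0 : ℝ) < (j : ℝ) + 1 := by positivity
    have : 1 / ((j : ℝ) + 1) + 1 / ((j : ℝ) + 1) ≤ 3 / ((j : ℝ) + 1) := by
      rw [← add_div, div_le_div_iff₀ h3 h3]; nlinarith
    linarith
  choose nf af tf h1 h2 h3 h4 h5 using hstep
  have h30 : Filter.Tendsto (fun j : ℕ => 3 / ((j : ℝ) + 1)) Filter.atTop (nhds 0) := by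
    have := tendsto_one_div_add_atTop_nhds_zero_nat.const_mul (3 : ℝ)
    simpa [mul_one_div, div_eq_mul_inv] using this
  have hxconv : Filter.Tendsto (fun j => ((γseq (nf j) (af j) : Ω) : UniformSpace.Completion Ω))
      Filter.atTop (nhds p) :=
    tendsto_iff_dist_tendsto_zero.2
      (squeeze_zero (fun _ => dist_nonneg) (fun j => (h4 j).le) h30)
  have hyconv : Filter.Tendsto (fun j => ((γseq (nf j) (tf j) : Ω) : UniformSpace.Completion Ω))
      Filter.atTop (nhds q') :=
    tendsto_iff_dist_tendsto_zero.2
      (squeeze_zero (fun _ => dist_nonneg) (fun j => (h5 j).le) h30)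
  obtain ⟨j, hjB⟩ := exists_nat_gt B
  have hseg : IsQHGeodesicSeg (γseq (nf j)) (af j) (tf j) (γseq (nf j) (af j))
      (γseq (nf j) (tf j)) :=
    ⟨h2 j, rfl, rfl, fun u hu v hv =>
      (hn (nf j)).1 (le_trans (h3 j) hu.1 : u ∈ Set.Ici 0)
        (le_trans (h3 j) hv.1 : v ∈ Set.Ici 0)⟩
  obtain ⟨u, hu, huK⟩ := hKprop _ _ hxconv hyconv j _ _ _ hseg
  have hu0 : 0 ≤ u := le_trans (h3 j) hu.1
  have hqd : qhDist (γseq (nf j) 0) (γseq (nf j) u) = u := ray_dist (hn (nf j)).1 hu0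
  rw [(hn (nf j)).2] at hqd
  have hle : qhDist x₀ (γseq (nf j) u) ≤ B := qhDist_le_of_qhEDist_le hB0 (hbound _ huK)
  have hju : (j : ℝ) ≤ u := le_trans (h1 j) hu.1
  linarith
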